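/- arXiv:1512.08880 — 7 statements merged into one kernel-verified Lean document; each statement's English description precedes it below -/
import Mathlib

section
/- Let G be an admissible feasibility set. Then there exists a constant C₂ > 0 such that |Φ_G(p_G, p_D) − Φ_G(p_G', p_D')| ≤ C₂ (‖p_G − p_G'‖ + ‖p_D − p_D'‖) for all (p_G, p_D), (p_G', p_D') ∈ D_G × ℝ^{n_L}_+, where ‖·‖ denotes the Euclidean norm. -/
open scoped BigOperators

/-- The minimal load-shedding cost
`Φ_G(p_G, p_D) := inf { c^⊤ z : z ∈ ℝ^{n_L}_+, (p_G, p_D − z) ∈ G }`. -/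
noncomputable def loadShedCost {nG nL : ℕ} (c : EuclideanSpace ℝ (Fin nL))
    (G : Set (EuclideanSpace ℝ (Fin nG) × EuclideanSpace ℝ (Fin nL)))
    (pG : EuclideanSpace ℝ (Fin nG)) (pD : EuclideanSpace ℝ (Fin nL)) : ℝ :=
  sInf {t : ℝ | ∃ z : EuclideanSpace ℝ (Fin nL),
    (∀ j, 0 ≤ z j) ∧ (pG, pD - z) ∈ G ∧ t = ∑ j, c j * z j}

/-- `G ⊆ ℝ^{n_G} × ℝ^{n_L}` is an admissible feasibility set (relative to `D_G`). -/
structure IsAdmissibleFeasibilitySet {nG nL : ℕ}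
    (DG : Set (EuclideanSpace ℝ (Fin nG)))
    (G : Set (EuclideanSpace ℝ (Fin nG) × EuclideanSpace ℝ (Fin nL))) : Prop where
  /-- (A) `G` is convex -/
  convex : Convex ℝ G
  /-- (A) `G` is compact -/
  compact : IsCompact G
  /-- (A) `G ⊆ ℝ^{n_G} × ℝ^{n_L}_+` -/
  snd_nonneg : ∀ p ∈ G, ∀ j, 0 ≤ p.2 j
  /-- (B) load shedding can always restore feasibility -/
  shed : ∀ pG ∈ DG, ∀ pD : EuclideanSpace ℝ (Fin nL), (∀ j, 0 ≤ pD j) →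
    ∃ z : EuclideanSpace ℝ (Fin nL), (∀ j, 0 ≤ z j) ∧ (pG, pD - z) ∈ G
  /-- (C) nonempty interior slices -/
  interior_slice : ∀ pG ∈ DG, ∃ pD : EuclideanSpace ℝ (Fin nL), (pG, pD) ∈ interior G
  /-- (D) load over-satisfaction -/
  oversat : ∀ pG pD, (pG, pD) ∈ G →
    ∀ pD' : EuclideanSpace ℝ (Fin nL), (∀ j, 0 ≤ pD' j) → (∀ j, pD' j ≤ pD j) →
      (pG, pD') ∈ G

private lemma csum_abs_le {nL : ℕ} (c d : EuclideanSpace ℝ (Fin nL)) :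
    ∑ j, c j * |d j| ≤ ‖c‖ * ‖d‖ := by
  set e : EuclideanSpace ℝ (Fin nL) := WithLp.toLp 2 (fun j => |d j|) with he
  have h := real_inner_le_norm c e
  rw [PiLp.inner_apply] at h
  simp only [RCLike.inner_apply, conj_trivial] at h
  have hn : ‖e‖ = ‖d‖ := by
    rw [EuclideanSpace.norm_eq, EuclideanSpace.norm_eq]
    congr 1
    exact Finset.sum_congr rfl fun j _ => by simp [he]
  rw [hn] at h
  exact le_trans (le_of_eq (by simp [he, mul_comm])) h

private lemma max_le_max_add_abs (a b : ℝ) : max a 0 ≤ max b 0 + |a - b| := by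
  have h2 := (abs_le.1 (abs_max_sub_max_le_abs a b 0)).2
  linarith

private lemma uniform_slater {nG nL : ℕ}
    (DG : Set (EuclideanSpace ℝ (Fin nG))) (hDGne : DG.Nonempty) (hDGcomp : IsCompact DG)
    (G : Set (EuclideanSpace ℝ (Fin nG) × EuclideanSpace ℝ (Fin nL)))
    (hint : ∀ pG ∈ DG, ∃ pD, (pG, pD) ∈ interior G) :
    ∃ r : ℝ, 0 < r ∧ ∀ pG ∈ DG, ∃ q, Metric.closedBall (pG, q) r ⊆ G := by
  classical
  have step : ∀ pG ∈ DG, ∃ ε : ℝ, 0 < ε ∧ ∀ pG', dist pG' pG < ε →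
      ∃ q, Metric.closedBall ((pG', q)) ε ⊆ G := by
    intro pG hpG
    obtain ⟨pD, hpD⟩ := hint pG hpG
    obtain ⟨δ, hδ, hball⟩ := Metric.isOpen_iff.1 isOpen_interior _ hpD
    refine ⟨δ/4, by positivity, fun pG' h => ⟨pD, fun x hx => interior_subset (hball ?_)⟩⟩
    rw [Metric.mem_closedBall] at hx
    rw [Metric.mem_ball]
    have hd : dist ((pG', pD) : EuclideanSpace ℝ (Fin nG) × EuclideanSpace ℝ (Fin nL)) (pG, pD)
        = dist pG' pG := by
      rw [Prod.dist_eq, dist_self, max_eq_left dist_nonneg]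
    calc dist x (pG, pD) ≤ dist x (pG', pD) + dist ((pG', pD) :
          EuclideanSpace ℝ (Fin nG) × EuclideanSpace ℝ (Fin nL)) (pG, pD) :=
        dist_triangle _ _ _
      _ < δ := by rw [hd]; linarith
  choose! ε hεpos hεprop using step
  obtain ⟨s, hs_sub, hs_cov⟩ := hDGcomp.elim_nhds_subcover (fun x => Metric.ball x (ε x))
    (fun x hx => Metric.ball_mem_nhds x (hεpos x hx))
  have hsne : s.Nonempty := by
    obtain ⟨x, hx⟩ := hDGne
    obtain ⟨i, hi, _⟩ := Set.mem_iUnion₂.1 (hs_cov hx)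
    exact ⟨i, hi⟩
  refine ⟨s.inf' hsne ε, ?_, ?_⟩
  · rw [Finset.lt_inf'_iff]
    exact fun b hb => hεpos b (hs_sub b hb)
  · intro pG hpG
    obtain ⟨i, hi, hmem⟩ := Set.mem_iUnion₂.1 (hs_cov hpG)
    obtain ⟨q, hq⟩ := hεprop i (hs_sub i hi) pG (Metric.mem_ball.1 hmem)
    exact ⟨q, (Metric.closedBall_subset_closedBall (Finset.inf'_le ε hi)).trans hq⟩

set_option maxHeartbeats 1000000 in
private lemma slice_move {nG nL : ℕ}
    (G : Set (EuclideanSpace ℝ (Fin nG) × EuclideanSpace ℝ (Fin nL)))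
    (hconv : Convex ℝ G) (M r : ℝ) (hM : ∀ p ∈ G, ‖p.2‖ ≤ M) (hr : 0 < r)
    (pG pG' : EuclideanSpace ℝ (Fin nG)) (y q : EuclideanSpace ℝ (Fin nL))
    (hy : (pG, y) ∈ G) (hq : Metric.closedBall ((pG', q)) r ⊆ G) :
    ∃ y', (pG', y') ∈ G ∧ ‖y' - y‖ ≤ (2 * M / r) * ‖pG - pG'‖ := by
  set δ := ‖pG - pG'‖ with hδdef
  have hδ0 : 0 ≤ δ := norm_nonneg _
  rcases eq_or_lt_of_le hδ0 with h0 | hpos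
  · have hEq : pG = pG' := sub_eq_zero.1 (norm_eq_zero.1 h0.symm)
    refine ⟨y, by rwa [← hEq], ?_⟩
    simp [← h0]
  · have hδr : 0 < δ + r := by linarith
    set a : ℝ := r / (δ + r) with ha
    set b : ℝ := δ / (δ + r) with hb
    have ha0 : 0 ≤ a := by positivity
    have hb0 : 0 ≤ b := by positivity
    have hab : a + b = 1 := by rw [ha, hb]; field_simp; ring
    set u : EuclideanSpace ℝ (Fin nG) := pG' + (r / δ) • (pG' - pG) with hu
    have hud : dist u pG' = r := by
      rw [dist_eq_norm]
      have h1 : u - pG' = (r / δ) • (pG' - pG) := by rw [hu, add_sub_cancel_left]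
      rw [h1, norm_smul, Real.norm_eq_abs, abs_of_pos (by positivity), norm_sub_rev, ← hδdef]
      field_simp
    have huq : ((u, q) : EuclideanSpace ℝ (Fin nG) × EuclideanSpace ℝ (Fin nL)) ∈ G := by
      apply hq
      rw [Metric.mem_closedBall, Prod.dist_eq]
      simp [hud, hr.le]
    have hcomb := hconv hy huq ha0 hb0 hab
    have hba : b * (r / δ) = a := by rw [ha, hb]; field_simp
    have ha1b : a = 1 - b := by linarith
    have hfst : a • pG + b • u = pG' := by
      rw [hu, smul_add, smul_smul, hba, ha1b]
      module
    refine ⟨a • y + b • q, ?_, ?_⟩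
    · have heq : a • ((pG, y) : EuclideanSpace ℝ (Fin nG) × EuclideanSpace ℝ (Fin nL))
          + b • (u, q) = (pG', a • y + b • q) := by
        rw [Prod.smul_mk, Prod.smul_mk, Prod.mk_add_mk, hfst]
      rwa [heq] at hcomb
    · have hsnd : (a • y + b • q) - y = b • (q - y) := by
        rw [ha1b]; module
      rw [hsnd, norm_smul, Real.norm_eq_abs, abs_of_nonneg hb0]
      have h1 : ‖q‖ ≤ M := hM ((pG', q)) (hq (Metric.mem_closedBall_self hr.le))
      have h2 : ‖y‖ ≤ M := hM ((pG, y)) hy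
      have hqy : ‖q - y‖ ≤ 2 * M := by
        calc ‖q - y‖ ≤ ‖q‖ + ‖y‖ := norm_sub_le _ _
          _ ≤ 2 * M := by linarith
      have hM0 : 0 ≤ M := le_trans (norm_nonneg _) h2
      have hble : b ≤ δ / r := by
        rw [hb, div_le_div_iff₀ hδr hr]; nlinarith
      calc b * ‖q - y‖ ≤ (δ / r) * (2 * M) :=
            mul_le_mul hble hqy (norm_nonneg _) (by positivity)
        _ = 2 * M / r * δ := by ring

private lemma loadShedCost_le_of_slice {nG nL : ℕ} (c : EuclideanSpace ℝ (Fin nL))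
    (hc : ∀ j, 0 < c j)
    (G : Set (EuclideanSpace ℝ (Fin nG) × EuclideanSpace ℝ (Fin nL)))
    (hsnd : ∀ p ∈ G, ∀ j, 0 ≤ p.2 j)
    (hover : ∀ pG pD, (pG, pD) ∈ G →
      ∀ pD' : EuclideanSpace ℝ (Fin nL), (∀ j, 0 ≤ pD' j) → (∀ j, pD' j ≤ pD j) →
        (pG, pD') ∈ G)
    (pG : EuclideanSpace ℝ (Fin nG)) (y pD : EuclideanSpace ℝ (Fin nL))
    (hy : (pG, y) ∈ G) (hpD : ∀ j, 0 ≤ pD j) :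
    loadShedCost c G pG pD ≤ ∑ j, c j * max (pD j - y j) 0 := by
  have hrfl : loadShedCost c G pG pD = sInf {t : ℝ | ∃ z : EuclideanSpace ℝ (Fin nL),
      (∀ j, 0 ≤ z j) ∧ (pG, pD - z) ∈ G ∧ t = ∑ j, c j * z j} := rfl
  rw [hrfl]
  apply csInf_le
  · refine ⟨0, fun t ht => ?_⟩
    obtain ⟨z, hz0, _, rfl⟩ := ht
    exact Finset.sum_nonneg fun j _ => mul_nonneg (hc j).le (hz0 j)
  · set z : EuclideanSpace ℝ (Fin nL) := WithLp.toLp 2 (fun j => max (pD j - y j) 0) with hzdef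
    refine ⟨z, fun j => le_max_right _ _, ?_, rfl⟩
    have hmem : ∀ j, (pD - z) j = min (pD j) (y j) := by
      intro j
      show pD j - max (pD j - y j) 0 = min (pD j) (y j)
      rcases le_total (pD j) (y j) with h | h
      · rw [max_eq_right (by linarith), min_eq_left h]; ring
      · rw [max_eq_left (by linarith), min_eq_right h]; ring
    apply hover pG y hy
    · intro j; rw [hmem j]; exact le_min (hpD j) (hsnd _ hy j)
    · intro j; rw [hmem j]; exact min_le_right _ _


/-- the minimal load-shedding cost `Φ_G` is Lipschitz on
`D_G × ℝ^{n_L}_+`. -/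
theorem loadShedCost_lipschitz {nG nL : ℕ} (hnG : 1 ≤ nG) (hnL : 1 ≤ nL)
    (DG : Set (EuclideanSpace ℝ (Fin nG))) (hDGne : DG.Nonempty)
    (hDGconv : Convex ℝ DG) (hDGcomp : IsCompact DG)
    (c : EuclideanSpace ℝ (Fin nL)) (hc : ∀ j, 0 < c j)
    (G : Set (EuclideanSpace ℝ (Fin nG) × EuclideanSpace ℝ (Fin nL)))
    (hG : IsAdmissibleFeasibilitySet DG G) :
    ∃ C₂ : ℝ, 0 < C₂ ∧
      ∀ pG ∈ DG, ∀ pG' ∈ DG, ∀ pD pD' : EuclideanSpace ℝ (Fin nL),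
        (∀ j, 0 ≤ pD j) → (∀ j, 0 ≤ pD' j) →
          |loadShedCost c G pG pD - loadShedCost c G pG' pD'| ≤
            C₂ * (‖pG - pG'‖ + ‖pD - pD'‖) := by
  obtain ⟨M, hM⟩ := isBounded_iff_forall_norm_le.1 hG.compact.isBounded
  have hM2 : ∀ p ∈ G, ‖p.2‖ ≤ M := fun p hp => le_trans (norm_snd_le p) (hM p hp)
  obtain ⟨r, hr, hslater⟩ := uniform_slater DG hDGne hDGcomp G hG.interior_slice
  have hGne : G.Nonempty := by
    obtain ⟨x0, hx0⟩ := hDGne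
    obtain ⟨z, _, hzG⟩ := hG.shed x0 hx0 0 (fun j => le_refl 0)
    exact ⟨_, hzG⟩
  have hM0 : 0 ≤ M := le_trans (norm_nonneg _) (hM2 _ hGne.choose_spec)
  set K : ℝ := 2 * M / r with hK
  have hK0 : 0 ≤ K := div_nonneg (by linarith) hr.le
  have hcn : (0:ℝ) ≤ ‖c‖ := norm_nonneg c
  have hcK : (0:ℝ) ≤ ‖c‖ * K := mul_nonneg hcn hK0
  refine ⟨‖c‖ * K + ‖c‖ + 1, by linarith, ?_⟩
  have key : ∀ pG ∈ DG, ∀ pG' ∈ DG, ∀ pD pD' : EuclideanSpace ℝ (Fin nL),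
      (∀ j, 0 ≤ pD j) → (∀ j, 0 ≤ pD' j) →
      loadShedCost c G pG pD ≤ loadShedCost c G pG' pD'
        + (‖c‖ * K + ‖c‖ + 1) * (‖pG - pG'‖ + ‖pD - pD'‖) := by
    intro pG hpG pG' hpG' pD pD' hpD hpD'
    have hne' : {t : ℝ | ∃ z : EuclideanSpace ℝ (Fin nL),
        (∀ j, 0 ≤ z j) ∧ (pG', pD' - z) ∈ G ∧ t = ∑ j, c j * z j}.Nonempty := by
      obtain ⟨z, hz0, hzG⟩ := hG.shed pG' hpG' pD' hpD'
      exact ⟨_, z, hz0, hzG, rfl⟩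
    have hrfl : loadShedCost c G pG' pD' = sInf {t : ℝ | ∃ z : EuclideanSpace ℝ (Fin nL),
        (∀ j, 0 ≤ z j) ∧ (pG', pD' - z) ∈ G ∧ t = ∑ j, c j * z j} := rfl
    rw [hrfl, ← sub_le_iff_le_add]
    apply le_csInf hne'
    rintro t ⟨z, hz0, hzG, rfl⟩
    rw [sub_le_iff_le_add]
    obtain ⟨q, hq⟩ := hslater pG hpG
    obtain ⟨y'', hy''G, hy''⟩ :=
      slice_move G hG.convex M r hM2 hr pG' pG (pD' - z) q hzG hq
    rw [norm_sub_rev pG' pG] at hy''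
    have h1 := loadShedCost_le_of_slice c hc G hG.snd_nonneg hG.oversat pG y'' pD hy''G hpD
    set d : EuclideanSpace ℝ (Fin nL) := (pD - y'') - z with hd
    have h2 : ∑ j, c j * max (pD j - y'' j) 0 ≤ ∑ j, c j * z j + ∑ j, c j * |d j| := by
      rw [← Finset.sum_add_distrib]
      apply Finset.sum_le_sum
      intro j _
      have hmx := max_le_max_add_abs (pD j - y'' j) (z j)
      rw [max_eq_left (hz0 j)] at hmx
      have hdj : d j = (pD j - y'' j) - z j := rfl
      calc c j * max (pD j - y'' j) 0 ≤ c j * (z j + |d j|) := by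
            apply mul_le_mul_of_nonneg_left _ (hc j).le
            rw [hdj]; exact hmx
        _ = c j * z j + c j * |d j| := by ring
    have h3 : ∑ j, c j * |d j| ≤ ‖c‖ * ‖d‖ := csum_abs_le c d
    have h4 : ‖d‖ ≤ ‖pD - pD'‖ + K * ‖pG - pG'‖ := by
      have hde : d = (pD - pD') + ((pD' - z) - y'') := by rw [hd]; abel
      rw [hde]
      have h5 : ‖(pD' - z) - y''‖ ≤ K * ‖pG - pG'‖ := by
        rw [norm_sub_rev]; exact hy''
      calc ‖(pD - pD') + ((pD' - z) - y'')‖ ≤ ‖pD - pD'‖ + ‖(pD' - z) - y''‖ :=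
            norm_add_le _ _
        _ ≤ ‖pD - pD'‖ + K * ‖pG - pG'‖ := by linarith
    have h6 : ‖c‖ * ‖d‖ ≤ ‖c‖ * (‖pD - pD'‖ + K * ‖pG - pG'‖) :=
      mul_le_mul_of_nonneg_left h4 hcn
    have h7 : ‖c‖ * (‖pD - pD'‖ + K * ‖pG - pG'‖)
        ≤ (‖c‖ * K + ‖c‖ + 1) * (‖pG - pG'‖ + ‖pD - pD'‖) := by
      have hg0 : (0:ℝ) ≤ ‖pG - pG'‖ := norm_nonneg _
      have hd0 : (0:ℝ) ≤ ‖pD - pD'‖ := norm_nonneg _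
      nlinarith [mul_nonneg hcK hd0, mul_nonneg hcn hg0]
    linarith
  intro pG hpG pG' hpG' pD pD' hpD hpD'
  rw [abs_sub_le_iff]
  constructor
  · linarith [key pG hpG pG' hpG' pD pD' hpD hpD']
  · have := key pG' hpG' pG hpG pD' pD hpD' hpD
    rw [norm_sub_rev pG' pG, norm_sub_rev pD' pD] at this
    linarith
end

section
/- Let G be an admissible feasibility set, let (p_G, p_D) ∈ D_G × ℝ^{n_L}_+, and let z* ∈ ℝ^{n_L}_+ with (p_G, p_D − z*) ∈ G satisfy c^⊤ z* = Φ_G(p_G, p_D) (i.e. z* is an optimal load disruption) and c^⊤ z* > 0. Then there exists a vector η = (η_G, η_L) ∈ ℝ^{n_G} × ℝ^{n_L} with Euclidean norm ‖η‖ = 1 such that: η_G^⊤ (p̂_G − p_G) + η_L^⊤ (p̂_D − (p_D − z*)) ≤ 0 for every (p̂_G, p̂_D) ∈ G; all coordinates of η_L are nonnegative; and η_{L,j} > 0 for at least one index j. -/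
open scoped BigOperators
open Filter Topology Set

private lemma euclid_sum_single {n : ℕ} (p : EuclideanSpace ℝ (Fin n)) :
    ∑ k, p k • EuclideanSpace.single k (1:ℝ) = p := by
  have := (EuclideanSpace.basisFun (Fin n) ℝ).sum_repr p
  simpa [EuclideanSpace.basisFun_apply, EuclideanSpace.basisFun_repr] using this

private lemma clm_repr {nG nL : ℕ}
    (f : (EuclideanSpace ℝ (Fin nG) × EuclideanSpace ℝ (Fin nL)) →L[ℝ] ℝ)
    (p : EuclideanSpace ℝ (Fin nG)) (q : EuclideanSpace ℝ (Fin nL)) :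
    f (p, q) = (∑ k, p k * f (EuclideanSpace.single k 1, 0))
      + ∑ j, q j * f (0, EuclideanSpace.single j 1) := by
  have hsplit : ((p, q) : EuclideanSpace ℝ (Fin nG) × EuclideanSpace ℝ (Fin nL))
      = (∑ k, p k • ((EuclideanSpace.single k (1:ℝ) : EuclideanSpace ℝ (Fin nG)),
            (0 : EuclideanSpace ℝ (Fin nL))))
        + (∑ j, q j • ((0 : EuclideanSpace ℝ (Fin nG)),
            (EuclideanSpace.single j (1:ℝ) : EuclideanSpace ℝ (Fin nL)))) := by
    refine Prod.ext ?_ ?_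
    · simp [Prod.fst_sum, Prod.smul_mk, euclid_sum_single]
    · simp [Prod.snd_sum, Prod.smul_mk, euclid_sum_single]
  rw [hsplit, map_add, map_sum, map_sum]
  simp only [map_smul, smul_eq_mul]

/-- at an optimal load disruption `z*` with strictly positive cost there is a
supporting unit vector `η = (η_G, η_L)` of `G` at `(p_G, p_D − z*)` with `η_L ≥ 0` and
`η_{L,j} > 0` for some `j`. -/
theorem exists_supporting_vector {nG nL : ℕ} (hnG : 1 ≤ nG) (hnL : 1 ≤ nL)
    (DG : Set (EuclideanSpace ℝ (Fin nG))) (hDGne : DG.Nonempty)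
    (hDGconv : Convex ℝ DG) (hDGcomp : IsCompact DG)
    (c : EuclideanSpace ℝ (Fin nL)) (hc : ∀ j, 0 < c j)
    (G : Set (EuclideanSpace ℝ (Fin nG) × EuclideanSpace ℝ (Fin nL)))
    (hG : IsAdmissibleFeasibilitySet DG G)
    (pG : EuclideanSpace ℝ (Fin nG)) (hpG : pG ∈ DG)
    (pD : EuclideanSpace ℝ (Fin nL)) (hpD : ∀ j, 0 ≤ pD j)
    (zstar : EuclideanSpace ℝ (Fin nL)) (hzstar_nonneg : ∀ j, 0 ≤ zstar j)
    (hzstar_mem : (pG, pD - zstar) ∈ G)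
    (hzstar_opt : ∑ j, c j * zstar j = loadShedCost c G pG pD)
    (hzstar_pos : 0 < ∑ j, c j * zstar j) :
    ∃ (ηG : EuclideanSpace ℝ (Fin nG)) (ηL : EuclideanSpace ℝ (Fin nL)),
      ‖ηG‖ ^ 2 + ‖ηL‖ ^ 2 = 1 ∧
      (∀ p ∈ G,
        (∑ k, ηG k * (p.1 k - pG k)) + (∑ j, ηL j * (p.2 j - (pD j - zstar j))) ≤ 0) ∧
      (∀ j, 0 ≤ ηL j) ∧ (∃ j, 0 < ηL j) := by
  classical
  set xs : EuclideanSpace ℝ (Fin nG) × EuclideanSpace ℝ (Fin nL) := (pG, pD - zstar) with hxs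
  -- a coordinate where zstar is positive
  obtain ⟨j0, hj0⟩ : ∃ j, 0 < zstar j := by
    by_contra h
    push_neg at h
    have hz0 : ∀ j, zstar j = 0 := fun j => le_antisymm (h j) (hzstar_nonneg j)
    have : ∑ j, c j * zstar j = 0 := by simp [hz0]
    linarith
  -- second coordinates of points of G at xs are nonneg
  have hxs2 : ∀ j, 0 ≤ pD j - zstar j := by
    intro j
    have := hG.snd_nonneg xs hzstar_mem j
    simpa [hxs] using this
  -- the upward cone at xs
  set C : Set (EuclideanSpace ℝ (Fin nG) × EuclideanSpace ℝ (Fin nL)) :=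
    {x | x.1 = pG ∧ ∀ j, pD j - zstar j ≤ x.2 j} with hC
  have hxsC : xs ∈ C := ⟨rfl, fun j => by simp [hxs]⟩
  have hCconv : Convex ℝ C := by
    rintro x ⟨hx1, hx2⟩ y ⟨hy1, hy2⟩ a b ha hb hab
    constructor
    · show a • x.1 + b • y.1 = pG
      rw [hx1, hy1, ← add_smul, hab, one_smul]
    · intro j
      have : (a • x + b • y).2 j = a * x.2 j + b * y.2 j := by simp
      rw [this]
      calc pD j - zstar j = a * (pD j - zstar j) + b * (pD j - zstar j) := by
            rw [← add_mul, hab, one_mul]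
        _ ≤ a * x.2 j + b * y.2 j :=
            add_le_add (mul_le_mul_of_nonneg_left (hx2 j) ha)
              (mul_le_mul_of_nonneg_left (hy2 j) hb)
  -- disjointness of interior G and C (using optimality of zstar)
  have hdisj : Disjoint (interior G) C := by
    rw [Set.disjoint_left]
    rintro x hxint ⟨hx1, hx2⟩
    obtain ⟨ε, hε, hball⟩ := Metric.isOpen_iff.1 isOpen_interior x hxint
    set δ := min (ε/2) (zstar j0) with hδ
    have hδpos : 0 < δ := lt_min (by linarith) hj0
    have hδε : δ < ε := lt_of_le_of_lt (min_le_left _ _) (by linarith)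
    have hδz : δ ≤ zstar j0 := min_le_right _ _
    set v : EuclideanSpace ℝ (Fin nL) := δ • EuclideanSpace.single j0 (1:ℝ) with hv
    have hvj : ∀ j, v j = if j = j0 then δ else 0 := by
      intro j
      simp [hv, EuclideanSpace.single_apply, mul_ite]
    -- the vertically shifted point is still in G
    have hy : (x.1, x.2 + v) ∈ G := by
      apply interior_subset
      apply hball
      rw [Metric.mem_ball]
      have h1 : dist ((x.1, x.2 + v)) x = max (dist x.1 x.1) (dist (x.2 + v) x.2) :=
        Prod.dist_eq
      have h2 : dist (x.2 + v) x.2 = ‖v‖ := by simp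
      have h3 : ‖v‖ = δ := by
        rw [hv, norm_smul]
        simp [abs_of_pos hδpos]
      rw [h1, h2, h3, dist_self, max_eq_right hδpos.le]
      exact hδε
    -- the cheaper shedding vector
    set z' : EuclideanSpace ℝ (Fin nL) := zstar - v with hz'
    have hz'j : ∀ j, z' j = zstar j - v j := by intro j; simp [hz']
    have hz'nonneg : ∀ j, 0 ≤ z' j := by
      intro j
      rw [hz'j, hvj]
      by_cases hjj : j = j0
      · subst hjj; simpa using sub_nonneg.2 hδz
      · simp [hjj, hzstar_nonneg j]
    have hfeas : (pG, pD - z') ∈ G := by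
      rw [hx1] at hy
      refine hG.oversat pG (x.2 + v) hy (pD - z') ?_ ?_
      · intro j
        have e : (pD - z') j = (pD j - zstar j) + v j := by
          rw [show (pD - z') j = pD j - z' j by simp, hz'j]; ring
        rw [e]
        have h5 : 0 ≤ v j := by rw [hvj]; split <;> simp [hδpos.le]
        have := hxs2 j
        linarith
      · intro j
        have h1 : (pD - z') j = (pD j - zstar j) + v j := by
          rw [show (pD - z') j = pD j - z' j by simp, hz'j]; ring
        have h2 : (x.2 + v) j = x.2 j + v j := by simp
        rw [h1, h2]
        have := hx2 j
        linarith
    -- its cost is strictly smaller, contradicting optimality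
    have hcost : ∑ j, c j * z' j = (∑ j, c j * zstar j) - δ * c j0 := by
      have e : ∀ j, c j * z' j = c j * zstar j - (if j = j0 then δ * c j0 else 0) := by
        intro j
        rw [hz'j, hvj]
        by_cases hjj : j = j0
        · subst hjj; rw [if_pos rfl, if_pos rfl]; ring
        · simp [hjj]
      rw [Finset.sum_congr rfl fun j _ => e j, Finset.sum_sub_distrib]
      simp
    have hmem : (∑ j, c j * z' j) ∈ {t : ℝ | ∃ z : EuclideanSpace ℝ (Fin nL),
        (∀ j, 0 ≤ z j) ∧ (pG, pD - z) ∈ G ∧ t = ∑ j, c j * z j} :=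
      ⟨z', hz'nonneg, hfeas, rfl⟩
    have hbdd : BddBelow {t : ℝ | ∃ z : EuclideanSpace ℝ (Fin nL),
        (∀ j, 0 ≤ z j) ∧ (pG, pD - z) ∈ G ∧ t = ∑ j, c j * z j} := by
      refine ⟨0, ?_⟩
      rintro t ⟨z, hz, -, rfl⟩
      exact Finset.sum_nonneg fun j _ => mul_nonneg (hc j).le (hz j)
    have hle : loadShedCost c G pG pD ≤ ∑ j, c j * z' j := csInf_le hbdd hmem
    rw [hcost, ← hzstar_opt] at hle
    nlinarith [hc j0, hδpos]
  -- separating functional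
  obtain ⟨f, u, hfu, huf⟩ :=
    geometric_hahn_banach_open (hG.convex.interior) isOpen_interior hCconv hdisj
  -- a slice interior point
  obtain ⟨pD0, hpD0⟩ := hG.interior_slice pG hpG
  -- f ≤ u on all of G
  have hGle : ∀ a ∈ G, f a ≤ u := by
    intro a ha
    have htend : Tendsto (fun t : ℝ => f (a + t • (((pG, pD0) : _ × _) - a)))
        (𝓝[>] (0:ℝ)) (𝓝 (f a)) := by
      have hcont : Continuous fun t : ℝ => f (a + t • (((pG, pD0) : _ × _) - a)) := by
        fun_prop
      have := hcont.tendsto 0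
      simp only [zero_smul, add_zero] at this
      exact this.mono_left nhdsWithin_le_nhds
    refine le_of_tendsto htend ?_
    filter_upwards [Ioc_mem_nhdsGT_of_mem (by norm_num : (0:ℝ) ∈ Set.Ico (0:ℝ) 1)] with t ht
    exact (hfu _ (hG.convex.add_smul_sub_mem_interior ha hpD0 ht)).le
  have hfxs : f xs = u := le_antisymm (hGle xs hzstar_mem) (huf xs hxsC)
  -- coordinates of the functional
  set a0 : Fin nG → ℝ := fun k => f (EuclideanSpace.single k 1, 0) with ha0
  set b0 : Fin nL → ℝ := fun j => f (0, EuclideanSpace.single j 1) with hb0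
  have hrepr : ∀ (p : EuclideanSpace ℝ (Fin nG)) (q : EuclideanSpace ℝ (Fin nL)),
      f (p, q) = (∑ k, p k * a0 k) + ∑ j, q j * b0 j := fun p q => clm_repr f p q
  have hfxs2 : f xs = (∑ k, pG k * a0 k) + ∑ j', (pD j' - zstar j') * b0 j' := by
    rw [hxs, hrepr]
    have e : ∀ j', ((pD - zstar) : EuclideanSpace ℝ (Fin nL)) j' * b0 j'
        = (pD j' - zstar j') * b0 j' := fun j' => by simp
    rw [Finset.sum_congr rfl fun j' _ => e j']
  -- b0 is nonnegative
  have hb0nonneg : ∀ j, 0 ≤ b0 j := by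
    intro j
    set w : EuclideanSpace ℝ (Fin nL) := (pD - zstar) + EuclideanSpace.single j 1 with hw
    have hwj : ∀ j', w j' = (pD j' - zstar j') + (if j' = j then 1 else 0) := by
      intro j'
      rw [hw]
      simp [EuclideanSpace.single_apply]
    have hmemC : ((pG, w) : EuclideanSpace ℝ (Fin nG) × EuclideanSpace ℝ (Fin nL)) ∈ C := by
      refine ⟨rfl, fun j' => ?_⟩
      show pD j' - zstar j' ≤ w j'
      rw [hwj]
      split <;> linarith
    have h1 := huf _ hmemC
    rw [hrepr] at h1
    have h3 : (∑ j', w j' * b0 j') = (∑ j', (pD j' - zstar j') * b0 j') + b0 j := by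
      have e : ∀ j', w j' * b0 j'
          = (pD j' - zstar j') * b0 j' + (if j' = j then b0 j else 0) := by
        intro j'
        rw [hwj]
        by_cases hjj : j' = j
        · subst hjj; rw [if_pos rfl, if_pos rfl]; ring
        · simp [hjj]
      rw [Finset.sum_congr rfl fun j' _ => e j', Finset.sum_add_distrib]
      simp
    rw [h3] at h1
    have h2 := hfxs2
    rw [hfxs] at h2
    linarith
  -- b0 is positive somewhere
  have hb0ne : ∃ j, 0 < b0 j := by
    by_contra h
    push_neg at h
    have hb00 : ∀ j, b0 j = 0 := fun j => le_antisymm (h j) (hb0nonneg j)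
    have h1 : f (pG, pD0) < u := hfu _ hpD0
    have h2 : f (pG, pD0) = ∑ k, pG k * a0 k := by rw [hrepr]; simp [hb00]
    have h3 : f xs = ∑ k, pG k * a0 k := by rw [hfxs2]; simp [hb00]
    rw [h2, ← h3, hfxs] at h1
    exact lt_irrefl _ h1
  -- support inequality in coordinates
  have hsupp : ∀ p ∈ G,
      (∑ k, a0 k * (p.1 k - pG k)) + (∑ j, b0 j * (p.2 j - (pD j - zstar j))) ≤ 0 := by
    intro p hp
    have h1 : f p ≤ u := hGle p hp
    have h2 := hrepr p.1 p.2
    rw [Prod.mk.eta] at h2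
    have e1 : (∑ k, a0 k * (p.1 k - pG k))
        = (∑ k, p.1 k * a0 k) - ∑ k, pG k * a0 k := by
      rw [← Finset.sum_sub_distrib]
      exact Finset.sum_congr rfl fun k _ => by ring
    have e2 : (∑ j, b0 j * (p.2 j - (pD j - zstar j)))
        = (∑ j, p.2 j * b0 j) - ∑ j, (pD j - zstar j) * b0 j := by
      rw [← Finset.sum_sub_distrib]
      exact Finset.sum_congr rfl fun j _ => by ring
    rw [e1, e2]
    have h4 := hfxs2
    rw [hfxs] at h4
    linarith
  -- normalization
  set gvec : EuclideanSpace ℝ (Fin nG) := WithLp.toLp 2 (fun k => a0 k) with hgvec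
  set lvec : EuclideanSpace ℝ (Fin nL) := WithLp.toLp 2 (fun j => b0 j) with hlvec
  have hgk : ∀ k, gvec k = a0 k := fun k => rfl
  have hlj : ∀ j, lvec j = b0 j := fun j => rfl
  obtain ⟨j1, hj1⟩ := hb0ne
  have hlvec_ne : lvec ≠ 0 := by
    intro h
    have h0 : lvec j1 = 0 := by rw [h]; rfl
    rw [hlj] at h0
    exact absurd h0 (ne_of_gt hj1)
  have hlpos : 0 < ‖lvec‖ := norm_pos_iff.2 hlvec_ne
  set S : ℝ := ‖gvec‖ ^ 2 + ‖lvec‖ ^ 2 with hS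
  have hSpos : 0 < S := by positivity
  set r : ℝ := Real.sqrt S with hr
  have hrpos : 0 < r := Real.sqrt_pos.2 hSpos
  have hr2 : r ^ 2 = S := Real.sq_sqrt hSpos.le
  refine ⟨r⁻¹ • gvec, r⁻¹ • lvec, ?_, ?_, ?_, ?_⟩
  · rw [norm_smul, norm_smul, mul_pow, mul_pow]
    have hnr : ‖r⁻¹‖ ^ 2 = (r ^ 2)⁻¹ := by
      rw [Real.norm_eq_abs, abs_of_pos (inv_pos.2 hrpos)]
      exact inv_pow r 2
    rw [hnr, hr2, ← mul_add, ← hS]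
    field_simp
  · intro p hp
    have h1 := hsupp p hp
    have h2 : ∀ k, (r⁻¹ • gvec) k = r⁻¹ * a0 k := fun k => by
      rw [show (r⁻¹ • gvec) k = r⁻¹ * gvec k by simp, hgk]
    have h3 : ∀ j, (r⁻¹ • lvec) j = r⁻¹ * b0 j := fun j => by
      rw [show (r⁻¹ • lvec) j = r⁻¹ * lvec j by simp, hlj]
    calc (∑ k, (r⁻¹ • gvec) k * (p.1 k - pG k))
          + (∑ j, (r⁻¹ • lvec) j * (p.2 j - (pD j - zstar j)))
        = r⁻¹ * ((∑ k, a0 k * (p.1 k - pG k))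
          + (∑ j, b0 j * (p.2 j - (pD j - zstar j)))) := by
          rw [mul_add, Finset.mul_sum, Finset.mul_sum]
          congr 1
          · exact Finset.sum_congr rfl fun k _ => by rw [h2 k]; ring
          · exact Finset.sum_congr rfl fun j _ => by rw [h3 j]; ring
      _ ≤ 0 := mul_nonpos_of_nonneg_of_nonpos (inv_pos.2 hrpos).le h1
  · intro j
    have h3 : (r⁻¹ • lvec) j = r⁻¹ * b0 j := by
      rw [show (r⁻¹ • lvec) j = r⁻¹ * lvec j by simp, hlj]
    rw [h3]
    exact mul_nonneg (inv_pos.2 hrpos).le (hb0nonneg j)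
  · refine ⟨j1, ?_⟩
    have h3 : (r⁻¹ • lvec) j1 = r⁻¹ * b0 j1 := by
      rw [show (r⁻¹ • lvec) j1 = r⁻¹ * lvec j1 by simp, hlj]
    rw [h3]
    exact mul_pos (inv_pos.2 hrpos) hj1
end

section
/- Let G_0, …, G_{n_c} be admissible feasibility sets, let q_0, …, q_{n_c} ≥ 0, and let C_G : D_G → ℝ be continuous. Define the running cost g(x, p_G) := C_G(p_G) + Σ_{i=0}^{n_c} q_i Φ_{G_i}(p_G, x^+) for x ∈ ℝ^{n_L} and p_G ∈ D_G, where x^+ denotes the componentwise positive part of x. Then there exists a constant C₁ > 0 such that |g(x, p_G)| ≤ C₁ (1 + ‖x‖) for all x ∈ ℝ^{n_L} and all p_G ∈ D_G, where ‖·‖ denotes the Euclidean norm. -/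
open scoped BigOperators

/-- The componentwise positive part `x⁺` of `x ∈ ℝ^{n_L}`. -/
noncomputable def posPart {nL : ℕ} (x : EuclideanSpace ℝ (Fin nL)) :
    EuclideanSpace ℝ (Fin nL) :=
  (EuclideanSpace.equiv (Fin nL) ℝ).symm (fun j => max (x j) 0)

/-- the running cost
`g(x, p_G) = C_G(p_G) + Σ_i q_i Φ_{G_i}(p_G, x⁺)` has linear growth in `x`,
uniformly in `p_G ∈ D_G`. -/
theorem runningCost_linear_growth {nG nL nc : ℕ} (hnG : 1 ≤ nG) (hnL : 1 ≤ nL)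
    (DG : Set (EuclideanSpace ℝ (Fin nG))) (hDGne : DG.Nonempty)
    (hDGconv : Convex ℝ DG) (hDGcomp : IsCompact DG)
    (c : EuclideanSpace ℝ (Fin nL)) (hc : ∀ j, 0 < c j)
    (G : Fin (nc + 1) → Set (EuclideanSpace ℝ (Fin nG) × EuclideanSpace ℝ (Fin nL)))
    (hG : ∀ i, IsAdmissibleFeasibilitySet DG (G i))
    (q : Fin (nc + 1) → ℝ) (hq : ∀ i, 0 ≤ q i)
    (CG : EuclideanSpace ℝ (Fin nG) → ℝ) (hCG : ContinuousOn CG DG) :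
    ∃ C₁ : ℝ, 0 < C₁ ∧
      ∀ x : EuclideanSpace ℝ (Fin nL), ∀ pG ∈ DG,
        |CG pG + ∑ i, q i * loadShedCost c (G i) pG (posPart x)| ≤ C₁ * (1 + ‖x‖) := by
  classical
  -- coordinate bound
  have coord_le : ∀ (y : EuclideanSpace ℝ (Fin nL)) (j : Fin nL), |y j| ≤ ‖y‖ := by
    intro y j
    rw [EuclideanSpace.norm_eq]
    have h1 : ‖y j‖ ^ 2 ≤ ∑ i, ‖y i‖ ^ 2 :=
      Finset.single_le_sum (f := fun i => ‖y i‖ ^ 2) (fun i _ => sq_nonneg _)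
        (Finset.mem_univ j)
    calc |y j| = Real.sqrt (‖y j‖ ^ 2) := by
          rw [Real.sqrt_sq_eq_abs]; simp [abs_abs, Real.norm_eq_abs]
      _ ≤ _ := Real.sqrt_le_sqrt h1
  -- norm of positive part
  have posPart_norm_le : ∀ x : EuclideanSpace ℝ (Fin nL), ‖posPart x‖ ≤ ‖x‖ := by
    intro x
    rw [EuclideanSpace.norm_eq, EuclideanSpace.norm_eq]
    apply Real.sqrt_le_sqrt
    apply Finset.sum_le_sum
    intro j _
    have hx : ‖(posPart x) j‖ ≤ ‖x j‖ := by
      show ‖max (x j) 0‖ ≤ ‖x j‖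
      rw [Real.norm_eq_abs, Real.norm_eq_abs]
      rcases le_or_gt (x j) 0 with h | h
      · rw [max_eq_right h]; simp [abs_nonneg]
      · rw [max_eq_left h.le]
    exact pow_le_pow_left₀ (norm_nonneg _) hx 2
  have posPart_nonneg : ∀ (x : EuclideanSpace ℝ (Fin nL)) (j : Fin nL),
      0 ≤ (posPart x) j := by
    intro x j; exact le_max_right _ _
  -- bounds on loadShedCost
  have key : ∀ (i : Fin (nc + 1)) (pG : EuclideanSpace ℝ (Fin nG)), pG ∈ DG →
      ∀ pD : EuclideanSpace ℝ (Fin nL), (∀ j, 0 ≤ pD j) →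
      0 ≤ loadShedCost c (G i) pG pD ∧
        loadShedCost c (G i) pG pD ≤ ∑ j, c j * pD j := by
    intro i pG hpG pD hpD
    set S := {t : ℝ | ∃ z : EuclideanSpace ℝ (Fin nL),
      (∀ j, 0 ≤ z j) ∧ (pG, pD - z) ∈ G i ∧ t = ∑ j, c j * z j} with hS
    have hzero : (pG, (0 : EuclideanSpace ℝ (Fin nL))) ∈ G i := by
      obtain ⟨z0, hz0, hmem⟩ := (hG i).shed pG hpG pD hpD
      exact (hG i).oversat pG (pD - z0) hmem 0 (fun j => le_refl 0)
        (fun j => (hG i).snd_nonneg _ hmem j)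
    have hmemS : (∑ j, c j * pD j) ∈ S := by
      refine ⟨pD, hpD, ?_, rfl⟩
      have : pD - pD = (0 : EuclideanSpace ℝ (Fin nL)) := sub_self pD
      rw [this]; exact hzero
    have hbdd : ∀ t ∈ S, (0:ℝ) ≤ t := by
      rintro t ⟨z, hz, _, rfl⟩
      exact Finset.sum_nonneg fun j _ => mul_nonneg (hc j).le (hz j)
    constructor
    · exact le_csInf ⟨_, hmemS⟩ hbdd
    · exact csInf_le ⟨0, hbdd⟩ hmemS
  -- bound on CG
  obtain ⟨M, hM⟩ := hDGcomp.exists_bound_of_continuousOn hCG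
  set Cc : ℝ := ∑ j, c j with hCc
  set Q : ℝ := ∑ i, q i with hQ
  have hCcnn : 0 ≤ Cc := Finset.sum_nonneg fun j _ => (hc j).le
  have hQnn : 0 ≤ Q := Finset.sum_nonneg fun i _ => hq i
  refine ⟨|M| + Q * Cc + 1, by positivity, ?_⟩
  intro x pG hpG
  have hMx : |CG pG| ≤ |M| := (hM pG hpG).trans (le_abs_self M)
  -- bound each Φ term
  have hPhi : ∀ i, 0 ≤ loadShedCost c (G i) pG (posPart x) ∧
      loadShedCost c (G i) pG (posPart x) ≤ Cc * ‖x‖ := by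
    intro i
    obtain ⟨h0, h1⟩ := key i pG hpG (posPart x) (posPart_nonneg x)
    refine ⟨h0, h1.trans ?_⟩
    calc ∑ j, c j * (posPart x) j ≤ ∑ j, c j * ‖x‖ := by
          apply Finset.sum_le_sum
          intro j _
          apply mul_le_mul_of_nonneg_left _ (hc j).le
          exact le_trans (le_trans (le_abs_self _) (coord_le (posPart x) j))
            (posPart_norm_le x)
      _ = Cc * ‖x‖ := by rw [← Finset.sum_mul]
  have hsum_nonneg : 0 ≤ ∑ i, q i * loadShedCost c (G i) pG (posPart x) :=
    Finset.sum_nonneg fun i _ => mul_nonneg (hq i) (hPhi i).1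
  have hsum_le : ∑ i, q i * loadShedCost c (G i) pG (posPart x) ≤ Q * Cc * ‖x‖ := by
    calc ∑ i, q i * loadShedCost c (G i) pG (posPart x)
        ≤ ∑ i, q i * (Cc * ‖x‖) :=
          Finset.sum_le_sum fun i _ => mul_le_mul_of_nonneg_left (hPhi i).2 (hq i)
      _ = Q * Cc * ‖x‖ := by rw [← Finset.sum_mul, mul_assoc]
  have habs : |CG pG + ∑ i, q i * loadShedCost c (G i) pG (posPart x)|
      ≤ |M| + Q * Cc * ‖x‖ := by
    calc |CG pG + ∑ i, q i * loadShedCost c (G i) pG (posPart x)|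
        ≤ |CG pG| + |∑ i, q i * loadShedCost c (G i) pG (posPart x)| := abs_add_le _ _
      _ ≤ |M| + Q * Cc * ‖x‖ := by
          gcongr
          rw [abs_of_nonneg hsum_nonneg]; exact hsum_le
  refine habs.trans ?_
  have hxnn : (0:ℝ) ≤ ‖x‖ := norm_nonneg x
  nlinarith [abs_nonneg M, mul_nonneg (mul_nonneg hQnn hCcnn) hxnn]
end

section
/- Let G_0, …, G_{n_c} be admissible feasibility sets, let q_0, …, q_{n_c} ≥ 0, and let C_G : D_G → ℝ be Lipschitz continuous. Define the running cost g(x, p_G) := C_G(p_G) + Σ_{i=0}^{n_c} q_i Φ_{G_i}(p_G, x^+) for x ∈ ℝ^{n_L} and p_G ∈ D_G, where x^+ denotes the componentwise positive part of x. Then there exists a constant C₂ > 0 such that |g(x, p_G) − g(x', p_G')| ≤ C₂ (‖x − x'‖ + ‖p_G − p_G'‖) for all x, x' ∈ ℝ^{n_L} and all p_G, p_G' ∈ D_G, where ‖·‖ denotes the Euclidean norm. -/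
open scoped BigOperators

section aux
variable {n : ℕ}

lemma es_apply_symm (f : Fin n → ℝ) (j : Fin n) :
    ((EuclideanSpace.equiv (Fin n) ℝ).symm f) j = f j := rfl

lemma es_abs_coord_le_norm (y : EuclideanSpace ℝ (Fin n)) (j : Fin n) : |y j| ≤ ‖y‖ := by
  rw [EuclideanSpace.norm_eq]
  rw [show |y j| = Real.sqrt (|y j| ^ 2) by rw [Real.sqrt_sq_eq_abs, abs_abs]]
  apply Real.sqrt_le_sqrt
  have := Finset.single_le_sum (f := fun i => ‖y i‖ ^ 2) (fun i _ => by positivity)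
    (Finset.mem_univ j)
  simpa [Real.norm_eq_abs, sq_abs] using this

lemma es_norm_le_of_abs_le {u v : EuclideanSpace ℝ (Fin n)} (h : ∀ j, |u j| ≤ |v j|) :
    ‖u‖ ≤ ‖v‖ := by
  rw [EuclideanSpace.norm_eq, EuclideanSpace.norm_eq]
  apply Real.sqrt_le_sqrt
  apply Finset.sum_le_sum
  intro i _
  simp only [Real.norm_eq_abs]
  exact pow_le_pow_left₀ (abs_nonneg _) (h i) 2

lemma es_sum_mul_abs_le (c a : EuclideanSpace ℝ (Fin n)) :
    ∑ j, c j * |a j| ≤ ‖c‖ * ‖a‖ := by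
  set c' : EuclideanSpace ℝ (Fin n) := (EuclideanSpace.equiv (Fin n) ℝ).symm (fun j => |c j|)
  set a' : EuclideanSpace ℝ (Fin n) := (EuclideanSpace.equiv (Fin n) ℝ).symm (fun j => |a j|)
  have h1 : ∑ j, c j * |a j| ≤ (inner ℝ c' a' : ℝ) := by
    simp only [PiLp.inner_apply, RCLike.inner_apply, conj_trivial]
    apply Finset.sum_le_sum
    intro i _
    simp only [c', a', es_apply_symm]
    exact (mul_le_mul_of_nonneg_right (le_abs_self _) (abs_nonneg _)).trans_eq (mul_comm _ _)
  have h2 : (inner ℝ c' a' : ℝ) ≤ ‖c'‖ * ‖a'‖ := real_inner_le_norm _ _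
  have hc' : ‖c'‖ = ‖c‖ := le_antisymm
    (es_norm_le_of_abs_le (fun j => by simp [c', es_apply_symm]))
    (es_norm_le_of_abs_le (fun j => by simp [c', es_apply_symm]))
  have ha' : ‖a'‖ = ‖a‖ := le_antisymm
    (es_norm_le_of_abs_le (fun j => by simp [a', es_apply_symm]))
    (es_norm_le_of_abs_le (fun j => by simp [a', es_apply_symm]))
  rw [hc', ha'] at h2
  linarith

end aux

lemma shed_lipschitz {nG nL : ℕ}
    (DG : Set (EuclideanSpace ℝ (Fin nG))) (hDGne : DG.Nonempty) (hDGcomp : IsCompact DG)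
    (c : EuclideanSpace ℝ (Fin nL)) (hc : ∀ j, 0 < c j)
    (G : Set (EuclideanSpace ℝ (Fin nG) × EuclideanSpace ℝ (Fin nL)))
    (hA : IsAdmissibleFeasibilitySet DG G) :
    ∃ K : ℝ, 0 ≤ K ∧ ∀ p ∈ DG, ∀ p' ∈ DG, ∀ pD pD' : EuclideanSpace ℝ (Fin nL),
      (∀ j, 0 ≤ pD j) → (∀ j, 0 ≤ pD' j) →
      loadShedCost c G p' pD' ≤ loadShedCost c G p pD + K * (‖p - p'‖ + ‖pD - pD'‖) := by
  classical
  -- bound on second coordinates of G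
  obtain ⟨R, hR⟩ := isBounded_iff_forall_norm_le.mp hA.compact.isBounded
  set M : ℝ := max R 0 with hMdef
  have hM0 : 0 ≤ M := le_max_right _ _
  have hMbound : ∀ qq ∈ G, ∀ j, qq.2 j ≤ M := by
    intro qq hq j
    calc qq.2 j ≤ |qq.2 j| := le_abs_self _
      _ ≤ ‖qq.2‖ := es_abs_coord_le_norm _ j
      _ ≤ ‖qq‖ := norm_snd_le qq
      _ ≤ R := hR qq hq
      _ ≤ M := le_max_left _ _
  -- uniform interior radius
  have hslice : ∀ p : EuclideanSpace ℝ (Fin nG), ∃ w : EuclideanSpace ℝ (Fin nL), ∃ r : ℝ,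
      0 < r ∧ (p ∈ DG → Metric.closedBall ((p, w) : _ × _) r ⊆ G) := by
    intro p
    by_cases hp : p ∈ DG
    · obtain ⟨w, hw⟩ := hA.interior_slice p hp
      rw [mem_interior_iff_mem_nhds, Metric.mem_nhds_iff] at hw
      obtain ⟨r, hr, hball⟩ := hw
      exact ⟨w, r / 2, by positivity,
        fun _ => (Metric.closedBall_subset_ball (by linarith)).trans hball⟩
    · exact ⟨0, 1, one_pos, fun h => absurd h hp⟩
  choose w r hr hball using hslice
  obtain ⟨T, hTDG, hcover⟩ := hDGcomp.elim_nhds_subcover (fun p => Metric.ball p (r p / 2))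
    (fun p _ => Metric.ball_mem_nhds p (half_pos (hr p)))
  have hTne : T.Nonempty := by
    obtain ⟨p, hp⟩ := hDGne
    obtain ⟨p₀, hp₀⟩ := Set.mem_iUnion₂.mp (hcover hp)
    exact ⟨p₀, hp₀.1⟩
  set ε : ℝ := T.inf' hTne (fun p => r p / 2) with hεdef
  have hε : 0 < ε := by
    rw [hεdef, Finset.lt_inf'_iff]
    intro b hb
    have := hr b
    positivity
  have huni : ∀ p ∈ DG, ∃ ww : EuclideanSpace ℝ (Fin nL),
      Metric.closedBall ((p, ww) : _ × _) ε ⊆ G := by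
    intro p hp
    obtain ⟨p₀, hp₀T, hp₀⟩ := Set.mem_iUnion₂.mp (hcover hp)
    refine ⟨w p₀, fun qq hq => hball p₀ (hTDG _ hp₀T) ?_⟩
    have h1 : dist qq ((p, w p₀) : _ × _) ≤ ε := hq
    have h2 : dist ((p, w p₀) : _ × _) ((p₀, w p₀) : _ × _) = dist p p₀ := by
      simp [Prod.dist_eq, dist_nonneg]
    have h3 : dist p p₀ < r p₀ / 2 := hp₀
    have h4 : ε ≤ r p₀ / 2 := Finset.inf'_le _ hp₀T
    have := dist_triangle qq ((p, w p₀) : _ × _) ((p₀, w p₀) : _ × _)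
    simp only [Metric.mem_closedBall]
    linarith
  -- the constant
  have hcsum : 0 ≤ ∑ j, c j := Finset.sum_nonneg fun j _ => (hc j).le
  refine ⟨‖c‖ + (∑ j, c j) * (M / ε), by positivity, ?_⟩
  intro p hp p' hp' pD pD' hpD hpD'
  set δG := ‖p - p'‖ with hδG
  set δD := ‖pD - pD'‖ with hδD
  have hδG0 : 0 ≤ δG := norm_nonneg _
  have hδD0 : 0 ≤ δD := norm_nonneg _
  -- the feasible-cost set at (p, pD) is nonempty
  have hSne : {t : ℝ | ∃ z : EuclideanSpace ℝ (Fin nL),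
      (∀ j, 0 ≤ z j) ∧ (p, pD - z) ∈ G ∧ t = ∑ j, c j * z j}.Nonempty := by
    obtain ⟨z, hz0, hzG⟩ := hA.shed p hp pD hpD
    exact ⟨_, z, hz0, hzG, rfl⟩
  rw [loadShedCost, ← sub_le_iff_le_add]
  apply le_csInf hSne
  rintro t ⟨z, hz0, hzG, rfl⟩
  rw [sub_le_iff_le_add]
  set y : EuclideanSpace ℝ (Fin nL) := pD - z with hy
  have hyG : (p, y) ∈ G := hzG
  have hy0 : ∀ j, 0 ≤ y j := hA.snd_nonneg _ hyG
  have hyM : ∀ j, y j ≤ M := hMbound _ hyG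
  -- transport the feasible point to p'
  have htrans : ∃ y₁ : EuclideanSpace ℝ (Fin nL), (p', y₁) ∈ G ∧
      ∀ j, y j - (M / ε) * δG ≤ y₁ j := by
    obtain ⟨ww, hww⟩ := huni p' hp'
    have hwwG : (p', ww) ∈ G := hww (Metric.mem_closedBall_self hε.le)
    have hww0 : ∀ j, 0 ≤ ww j := hA.snd_nonneg _ hwwG
    by_cases hpp : p = p'
    · subst hpp
      refine ⟨y, hyG, fun j => ?_⟩
      have : δG = 0 := by simp [hδG]
      rw [this]
      simp
    · have hδGpos : 0 < δG := by
        rw [hδG, norm_pos_iff]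
        exact sub_ne_zero.mpr hpp
      by_cases hre : δG ≤ ε
      · set l : ℝ := δG / ε with hl
        have hl0 : 0 < l := by positivity
        have hl1 : l ≤ 1 := by
          rw [hl, div_le_one hε]; exact hre
        set u : EuclideanSpace ℝ (Fin nG) := p' + ((1 - l) / l) • (p' - p) with hu
        have huball : (u, ww) ∈ G := by
          apply hww
          simp only [Metric.mem_closedBall, Prod.dist_eq, dist_self]
          rw [max_le_iff]
          constructor
          · rw [dist_eq_norm]
            have : u - p' = ((1 - l) / l) • (p' - p) := by rw [hu]; abel
            rw [this, norm_smul, Real.norm_eq_abs,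
              abs_of_nonneg (div_nonneg (by linarith) hl0.le)]
            have hnp : ‖p' - p‖ = δG := by rw [hδG, norm_sub_rev]
            rw [hnp]
            rw [div_mul_eq_mul_div, div_le_iff₀ hl0]
            have hεl : ε * l = δG := by rw [hl]; field_simp
            rw [hεl]
            nlinarith
          · exact hε.le
        have hcomb : ((1 - l) • (p, y) + l • ((u, ww) : _ × _)) ∈ G :=
          hA.convex hyG huball (by linarith) hl0.le (by ring)
        have hfst : (1 - l) • p + l • u = p' := by
          rw [hu, smul_add, smul_smul]
          rw [show l * ((1 - l) / l) = 1 - l by field_simp]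
          module
        have hcomb' : ((p', (1 - l) • y + l • ww) : _ × _) ∈ G := by
          have : ((1 - l) • (p, y) + l • ((u, ww) : _ × _))
              = ((p', (1 - l) • y + l • ww) : _ × _) := by
            rw [Prod.smul_mk, Prod.smul_mk, Prod.mk_add_mk, hfst]
          rwa [this] at hcomb
        refine ⟨(1 - l) • y + l • ww, hcomb', fun j => ?_⟩
        have happ : ((1 - l) • y + l • ww) j = (1 - l) * y j + l * ww j := by simp
        rw [happ]
        have h1 : l * M = (M / ε) * δG := by rw [hl]; field_simp
        have := hww0 j
        have := hyM j
        have := hy0 j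
        nlinarith
      · refine ⟨ww, hwwG, fun j => ?_⟩
        push_neg at hre
        have : M ≤ (M / ε) * δG := by
          rw [div_mul_eq_mul_div, le_div_iff₀ hε]
          nlinarith
        have := hww0 j
        have := hyM j
        linarith
  obtain ⟨y₁, hy₁G, hy₁⟩ := htrans
  have hy₁0 : ∀ j, 0 ≤ y₁ j := hA.snd_nonneg _ hy₁G
  -- the new shedding vector
  set z'' : EuclideanSpace ℝ (Fin nL) :=
    (EuclideanSpace.equiv (Fin nL) ℝ).symm (fun j => max (pD' j - y₁ j) 0) with hz''
  have hz''app : ∀ j, z'' j = max (pD' j - y₁ j) 0 := fun j => rfl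
  have hz''0 : ∀ j, 0 ≤ z'' j := fun j => le_max_right _ _
  have htarget : (p', pD' - z'') ∈ G := by
    apply hA.oversat p' y₁ hy₁G
    · intro j
      have happ : (pD' - z'') j = pD' j - z'' j := by simp
      rw [happ, hz''app]
      rcases max_cases (pD' j - y₁ j) 0 with ⟨he, _⟩ | ⟨he, _⟩ <;> rw [he]
      · linarith [hy₁0 j]
      · linarith [hpD' j]
    · intro j
      have happ : (pD' - z'') j = pD' j - z'' j := by simp
      rw [happ, hz''app]
      have := le_max_left (pD' j - y₁ j) 0
      linarith
  have hmem : (∑ j, c j * z'' j) ∈ {t : ℝ | ∃ zz : EuclideanSpace ℝ (Fin nL),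
      (∀ j, 0 ≤ zz j) ∧ (p', pD' - zz) ∈ G ∧ t = ∑ j, c j * zz j} :=
    ⟨z'', hz''0, htarget, rfl⟩
  have hbdd : BddBelow {t : ℝ | ∃ zz : EuclideanSpace ℝ (Fin nL),
      (∀ j, 0 ≤ zz j) ∧ (p', pD' - zz) ∈ G ∧ t = ∑ j, c j * zz j} := by
    refine ⟨0, ?_⟩
    rintro t ⟨zz, hzz0, _, rfl⟩
    exact Finset.sum_nonneg fun j _ => mul_nonneg (hc j).le (hzz0 j)
  have hΦle : loadShedCost c G p' pD' ≤ ∑ j, c j * z'' j := csInf_le hbdd hmem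
  -- cost estimate
  have hzval : ∀ j, z j = pD j - y j := by
    intro j
    rw [hy]
    have : (pD - z) j = pD j - z j := by simp
    rw [this]; ring
  have hcost : ∀ j, z'' j ≤ z j + |pD j - pD' j| + (M / ε) * δG := by
    intro j
    rw [hz''app]
    apply max_le
    · have h1 := hy₁ j
      have h2 := hzval j
      have : pD' j - pD j ≤ |pD j - pD' j| := by
        rw [abs_sub_comm]; exact le_abs_self _
      linarith
    · have := hz0 j
      have := abs_nonneg (pD j - pD' j)
      have : (0:ℝ) ≤ (M / ε) * δG := by positivity
      linarith [hz0 j, abs_nonneg (pD j - pD' j)]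
  have hsum : ∑ j, c j * z'' j ≤ ∑ j, c j * z j + ∑ j, c j * |pD j - pD' j|
      + (∑ j, c j) * ((M / ε) * δG) := by
    rw [Finset.sum_mul]
    rw [← Finset.sum_add_distrib, ← Finset.sum_add_distrib]
    apply Finset.sum_le_sum
    intro j _
    have := hcost j
    have := (hc j).le
    nlinarith
  have hCS : ∑ j, c j * |pD j - pD' j| ≤ ‖c‖ * δD := by
    have : ∀ j, |pD j - pD' j| = |(pD - pD') j| := by
      intro j
      simp
    calc ∑ j, c j * |pD j - pD' j| = ∑ j, c j * |(pD - pD') j| := by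
          apply Finset.sum_congr rfl; intro j _; rw [this j]
      _ ≤ ‖c‖ * ‖pD - pD'‖ := es_sum_mul_abs_le c (pD - pD')
      _ = ‖c‖ * δD := rfl
  have hnormc : 0 ≤ ‖c‖ := norm_nonneg _
  have hMε : 0 ≤ M / ε := by positivity
  calc loadShedCost c G p' pD' ≤ ∑ j, c j * z'' j := hΦle
    _ ≤ ∑ j, c j * z j + ∑ j, c j * |pD j - pD' j| + (∑ j, c j) * ((M / ε) * δG) := hsum
    _ ≤ ∑ j, c j * z j + ‖c‖ * δD + (∑ j, c j) * ((M / ε) * δG) := by linarith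
    _ ≤ ∑ j, c j * z j + (‖c‖ + (∑ j, c j) * (M / ε)) * (δG + δD) := by
        nlinarith [mul_nonneg hnormc hδG0, mul_nonneg (mul_nonneg hcsum hMε) hδD0]

lemma posPart_apply {nL : ℕ} (x : EuclideanSpace ℝ (Fin nL)) (j : Fin nL) :
    posPart x j = max (x j) 0 := rfl

lemma posPart_coord_nonneg {nL : ℕ} (x : EuclideanSpace ℝ (Fin nL)) (j : Fin nL) :
    0 ≤ posPart x j := le_max_right _ _

lemma norm_posPart_sub_le {nL : ℕ} (x x' : EuclideanSpace ℝ (Fin nL)) :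
    ‖posPart x - posPart x'‖ ≤ ‖x - x'‖ := by
  apply es_norm_le_of_abs_le
  intro j
  have h1 : (posPart x - posPart x') j = max (x j) 0 - max (x' j) 0 := by
    have : (posPart x - posPart x') j = posPart x j - posPart x' j := by simp
    rw [this, posPart_apply, posPart_apply]
  have h2 : (x - x') j = x j - x' j := by simp
  rw [h1, h2]
  calc |max (x j) 0 - max (x' j) 0| ≤ |x j - x' j| := abs_max_sub_max_le_abs _ _ _
    _ ≤ |x j - x' j| := le_rfl

/-- if `C_G` is Lipschitz on `D_G`, then the running cost
`g(x, p_G) = C_G(p_G) + Σ_i q_i Φ_{G_i}(p_G, x⁺)` is jointly Lipschitz in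
`(x, p_G) ∈ ℝ^{n_L} × D_G`. -/
theorem runningCost_lipschitz {nG nL nc : ℕ} (hnG : 1 ≤ nG) (hnL : 1 ≤ nL)
    (DG : Set (EuclideanSpace ℝ (Fin nG))) (hDGne : DG.Nonempty)
    (hDGconv : Convex ℝ DG) (hDGcomp : IsCompact DG)
    (c : EuclideanSpace ℝ (Fin nL)) (hc : ∀ j, 0 < c j)
    (G : Fin (nc + 1) → Set (EuclideanSpace ℝ (Fin nG) × EuclideanSpace ℝ (Fin nL)))
    (hG : ∀ i, IsAdmissibleFeasibilitySet DG (G i))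
    (q : Fin (nc + 1) → ℝ) (hq : ∀ i, 0 ≤ q i)
    (CG : EuclideanSpace ℝ (Fin nG) → ℝ)
    (hCG : ∃ L : ℝ, 0 ≤ L ∧ ∀ p ∈ DG, ∀ p' ∈ DG, |CG p - CG p'| ≤ L * ‖p - p'‖) :
    ∃ C₂ : ℝ, 0 < C₂ ∧
      ∀ x x' : EuclideanSpace ℝ (Fin nL), ∀ pG ∈ DG, ∀ pG' ∈ DG,
        |(CG pG + ∑ i, q i * loadShedCost c (G i) pG (posPart x)) -
            (CG pG' + ∑ i, q i * loadShedCost c (G i) pG' (posPart x'))| ≤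
          C₂ * (‖x - x'‖ + ‖pG - pG'‖) := by
  obtain ⟨L, hL0, hLip⟩ := hCG
  have h := fun i => shed_lipschitz DG hDGne hDGcomp c hc (G i) (hG i)
  choose K hK0 hKlip using h
  have hqK : 0 ≤ ∑ i, q i * K i := Finset.sum_nonneg fun i _ => mul_nonneg (hq i) (hK0 i)
  refine ⟨L + (∑ i, q i * K i) + 1, by linarith, ?_⟩
  intro x x' pG hpG pG' hpG'
  set D : ℝ := ‖x - x'‖ + ‖pG - pG'‖ with hD
  have hD0 : 0 ≤ D := add_nonneg (norm_nonneg _) (norm_nonneg _)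
  have hpp : ‖posPart x - posPart x'‖ ≤ ‖x - x'‖ := norm_posPart_sub_le x x'
  have hΦ : ∀ i, |loadShedCost c (G i) pG (posPart x)
      - loadShedCost c (G i) pG' (posPart x')| ≤ K i * D := by
    intro i
    have h1 := hKlip i pG hpG pG' hpG' (posPart x) (posPart x')
      (posPart_coord_nonneg x) (posPart_coord_nonneg x')
    have h2 := hKlip i pG' hpG' pG hpG (posPart x') (posPart x)
      (posPart_coord_nonneg x') (posPart_coord_nonneg x)
    have hsymm : ‖pG' - pG‖ = ‖pG - pG'‖ := norm_sub_rev _ _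
    have hsymm2 : ‖posPart x' - posPart x‖ = ‖posPart x - posPart x'‖ := norm_sub_rev _ _
    rw [hsymm, hsymm2] at h2
    have hKD1 : K i * (‖pG - pG'‖ + ‖posPart x - posPart x'‖) ≤ K i * D := by
      apply mul_le_mul_of_nonneg_left _ (hK0 i)
      rw [hD]
      linarith
    rw [abs_sub_le_iff]
    constructor
    · linarith
    · linarith
  have hsplit : ∑ i, q i * (loadShedCost c (G i) pG (posPart x)
        - loadShedCost c (G i) pG' (posPart x'))
      = (∑ i, q i * loadShedCost c (G i) pG (posPart x))
        - ∑ i, q i * loadShedCost c (G i) pG' (posPart x') := by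
    rw [← Finset.sum_sub_distrib]
    apply Finset.sum_congr rfl
    intros
    ring
  have hsumKD : ∑ i, q i * (K i * D) = (∑ i, q i * K i) * D := by
    rw [Finset.sum_mul]
    apply Finset.sum_congr rfl
    intros
    ring
  calc |(CG pG + ∑ i, q i * loadShedCost c (G i) pG (posPart x)) -
          (CG pG' + ∑ i, q i * loadShedCost c (G i) pG' (posPart x'))|
      = |(CG pG - CG pG') + ∑ i, q i * (loadShedCost c (G i) pG (posPart x)
          - loadShedCost c (G i) pG' (posPart x'))| := by
        rw [hsplit]; ring_nf
    _ ≤ |CG pG - CG pG'| + |∑ i, q i * (loadShedCost c (G i) pG (posPart x)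
          - loadShedCost c (G i) pG' (posPart x'))| := abs_add_le _ _
    _ ≤ |CG pG - CG pG'| + ∑ i, |q i * (loadShedCost c (G i) pG (posPart x)
          - loadShedCost c (G i) pG' (posPart x'))| := by
        have := Finset.abs_sum_le_sum_abs
          (fun i => q i * (loadShedCost c (G i) pG (posPart x)
            - loadShedCost c (G i) pG' (posPart x'))) Finset.univ
        linarith
    _ ≤ L * ‖pG - pG'‖ + ∑ i, q i * (K i * D) := by
        apply add_le_add (hLip pG hpG pG' hpG')
        apply Finset.sum_le_sum
        intro i _
        rw [abs_mul, abs_of_nonneg (hq i)]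
        exact mul_le_mul_of_nonneg_left (hΦ i) (hq i)
    _ ≤ L * D + (∑ i, q i * K i) * D := by
        rw [hsumKD]
        have : ‖pG - pG'‖ ≤ D := by rw [hD]; linarith [norm_nonneg (x - x')]
        have := mul_le_mul_of_nonneg_left this hL0
        linarith
    _ ≤ (L + (∑ i, q i * K i) + 1) * D := by nlinarith
end

section
/- Let n ≥ 1 and let c, η ∈ ℝⁿ both have all coordinates strictly positive, and let y, x, d be real numbers. Then the infimum of c^⊤ z over all z ∈ ℝⁿ with z ≥ 0 componentwise and y + x − η^⊤ z ≤ d equals max(0, y + x − d) · min_{1 ≤ k ≤ n} (c_k / η_k), and this infimum is attained. -/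
open scoped BigOperators

/-- closed form of the scalar load-shedding problem.  For `c, η > 0`
componentwise, the infimum of `c^⊤ z` over `z ≥ 0` with `y + x − η^⊤ z ≤ d` is attained
and equals `max(0, y + x − d) · min_k (c_k / η_k)`. -/
theorem scalar_loadShed_closed_form {n : ℕ} (hn : 1 ≤ n)
    (c η : EuclideanSpace ℝ (Fin n)) (hc : ∀ k, 0 < c k) (hη : ∀ k, 0 < η k)
    (y x d : ℝ) :
    IsLeast
      {t : ℝ | ∃ z : EuclideanSpace ℝ (Fin n),
        (∀ k, 0 ≤ z k) ∧ y + x - ∑ k, η k * z k ≤ d ∧ t = ∑ k, c k * z k}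
      (max 0 (y + x - d) * sInf (Set.range fun k : Fin n => c k / η k)) := by
  haveI : NeZero n := ⟨Nat.one_le_iff_ne_zero.mp hn⟩
  have hne : Nonempty (Fin n) := Fin.pos_iff_nonempty.mp hn
  -- find minimizer k₀ of c k / η k
  obtain ⟨k₀, -, hk₀⟩ := Finset.exists_min_image Finset.univ
    (fun k => c k / η k) (Finset.univ_nonempty)
  have hk₀' : ∀ j, c k₀ / η k₀ ≤ c j / η j := fun j => hk₀ j (Finset.mem_univ j)
  have hInf : sInf (Set.range fun k : Fin n => c k / η k) = c k₀ / η k₀ := by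
    apply le_antisymm
    · exact csInf_le (Set.Finite.bddBelow (Set.finite_range _)) ⟨k₀, rfl⟩
    · exact le_csInf (Set.range_nonempty _) (by rintro t ⟨j, rfl⟩; exact hk₀' j)
  rw [hInf]
  set M := max 0 (y + x - d) with hM
  have hM0 : 0 ≤ M := le_max_left _ _
  have hm0 : 0 ≤ c k₀ / η k₀ := le_of_lt (div_pos (hc k₀) (hη k₀))
  constructor
  · -- membership: z = M/η k₀ at k₀, 0 elsewhere
    refine ⟨WithLp.toLp 2 (fun k => if k = k₀ then M / η k₀ else 0), ?_, ?_, ?_⟩ <;> dsimp only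
    · intro k; split
      · exact div_nonneg hM0 (hη k₀).le
      · exact le_refl 0
    · have : (∑ k, η k * (if k = k₀ then M / η k₀ else 0)) = M := by
        rw [Finset.sum_eq_single k₀]
        · simp [mul_div_cancel₀, (hη k₀).ne']
        · intro b _ hb; simp [hb]
        · intro h; exact absurd (Finset.mem_univ k₀) h
      rw [this]; have := le_max_right 0 (y + x - d); rw [hM]; linarith
    · rw [Finset.sum_eq_single k₀]
      · simp only [if_pos rfl, if_true]
        field_simp
      · intro b _ hb; simp [hb]
      · intro h; exact absurd (Finset.mem_univ k₀) h
  · -- lower bound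
    rintro t ⟨z, hz, hcon, rfl⟩
    have hηz : ∀ k, 0 ≤ η k * z k := fun k => mul_nonneg (hη k).le (hz k)
    have hsum : M ≤ ∑ k, η k * z k := by
      apply max_le
      · exact Finset.sum_nonneg fun k _ => hηz k
      · linarith
    calc M * (c k₀ / η k₀) ≤ (∑ k, η k * z k) * (c k₀ / η k₀) :=
          mul_le_mul_of_nonneg_right hsum hm0
      _ = ∑ k, (c k₀ / η k₀) * (η k * z k) := by rw [Finset.sum_mul]; congr 1; ext k; ring
      _ ≤ ∑ k, (c k / η k) * (η k * z k) :=
          Finset.sum_le_sum fun k _ => mul_le_mul_of_nonneg_right (hk₀' k) (hηz k)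
      _ = ∑ k, c k * z k := by
          congr 1; ext k
          rw [div_mul_eq_mul_div, mul_comm (η k) (z k), ← mul_assoc, mul_div_assoc,
            div_self (hη k).ne', mul_one]
end

section
/- Let n_G ≥ 1, n_L ≥ 1, let c ∈ ℝ^{n_L} and η_L ∈ ℝ^{n_L} both have all coordinates strictly positive, let η_G ∈ ℝ^{n_G}, let d ∈ ℝ, and let G ⊆ ℝ^{n_G} × ℝ^{n_L} satisfy η_G^⊤ u + η_L^⊤ v ≤ d for all (u, v) ∈ G. Then for every p_G ∈ ℝ^{n_G}, every x ∈ ℝ^{n_L}, and every z ∈ ℝ^{n_L} with z ≥ 0 componentwise and (p_G, x − z) ∈ G, one has c^⊤ z ≥ max(0, η_G^⊤ p_G + η_L^⊤ x − d) · min_{1 ≤ k ≤ n_L} (c_k / η_{L,k}). -/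
open scoped BigOperators

/-- if `G` is contained in the half-space
`{(u, v) : η_G^⊤ u + η_L^⊤ v ≤ d}`, then the relaxed scalar load-shedding cost
`max(0, η_G^⊤ p_G + η_L^⊤ x − d) · min_k (c_k / η_{L,k})` is a lower bound for `c^⊤ z`
for every feasible load disruption `z`. -/
theorem relaxed_loadShed_lower_bound {nG nL : ℕ} (hnG : 1 ≤ nG) (hnL : 1 ≤ nL)
    (c ηL : EuclideanSpace ℝ (Fin nL)) (hc : ∀ k, 0 < c k) (hηL : ∀ k, 0 < ηL k)
    (ηG : EuclideanSpace ℝ (Fin nG)) (d : ℝ)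
    (G : Set (EuclideanSpace ℝ (Fin nG) × EuclideanSpace ℝ (Fin nL)))
    (hG : ∀ p ∈ G, (∑ k, ηG k * p.1 k) + (∑ k, ηL k * p.2 k) ≤ d) :
    ∀ pG : EuclideanSpace ℝ (Fin nG), ∀ x z : EuclideanSpace ℝ (Fin nL),
      (∀ k, 0 ≤ z k) → (pG, x - z) ∈ G →
        max 0 ((∑ k, ηG k * pG k) + (∑ k, ηL k * x k) - d) *
            sInf (Set.range fun k : Fin nL => c k / ηL k) ≤
          ∑ k, c k * z k := by
  intro pG x z hz hmem
  set S : Set ℝ := Set.range fun k : Fin nL => c k / ηL k with hS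
  have hfin : S.Finite := Set.finite_range _
  have : Nonempty (Fin nL) := ⟨⟨0, hnL⟩⟩
  have hne : S.Nonempty := Set.range_nonempty _
  have hbdd : BddBelow S := hfin.bddBelow
  set m : ℝ := sInf S with hm
  have hm_mem : m ∈ S := hne.csInf_mem hfin
  obtain ⟨k0, hk0⟩ := hm_mem
  have hm_pos : 0 < m := by
    rw [← hk0]; exact div_pos (hc k0) (hηL k0)
  have hm_le : ∀ k, m ≤ c k / ηL k := fun k => csInf_le hbdd ⟨k, rfl⟩
  -- key feasibility inequality
  have hfeas := hG _ hmem
  simp only at hfeas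
  have hsub : ∀ k, (x - z : EuclideanSpace ℝ (Fin nL)) k = x k - z k := fun k => rfl
  have hkey : (∑ k, ηG k * pG k) + (∑ k, ηL k * x k) - d ≤ ∑ k, ηL k * z k := by
    have : (∑ k, ηL k * (x - z : EuclideanSpace ℝ (Fin nL)) k)
        = (∑ k, ηL k * x k) - ∑ k, ηL k * z k := by
      simp only [hsub, mul_sub]
      rw [Finset.sum_sub_distrib]
    linarith [hfeas, this ▸ hfeas]
  have hzsum : 0 ≤ ∑ k, ηL k * z k :=
    Finset.sum_nonneg fun k _ => mul_nonneg (hηL k).le (hz k)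
  have hmax : max 0 ((∑ k, ηG k * pG k) + (∑ k, ηL k * x k) - d) ≤ ∑ k, ηL k * z k :=
    max_le hzsum hkey
  calc max 0 ((∑ k, ηG k * pG k) + (∑ k, ηL k * x k) - d) * m
      ≤ (∑ k, ηL k * z k) * m := mul_le_mul_of_nonneg_right hmax hm_pos.le
    _ = ∑ k, (m * ηL k) * z k := by rw [Finset.sum_mul]; congr 1; ext k; ring
    _ ≤ ∑ k, c k * z k := by
        apply Finset.sum_le_sum
        intro k _
        apply mul_le_mul_of_nonneg_right _ (hz k)
        have := hm_le k
        rw [le_div_iff₀ (hηL k)] at this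
        linarith
end

section
/- Let n ≥ 1, let c ∈ ℝⁿ have all coordinates strictly positive, let σ be a real n × n matrix, and let y ≥ d ≥ 0 be real numbers. Then max over x̃ ∈ ℝⁿ with ‖x̃‖ = y of ( min over x̂ ∈ ℝⁿ with ‖x̂‖ ≤ d of c^⊤ (σ(x̃ − x̂))^+ ) equals (y − d) · max_{‖ξ‖ = 1} c^⊤ (σξ)^+. -/
open scoped BigOperators

section Aux
variable {n : ℕ} (c : EuclideanSpace ℝ (Fin n)) (σ : Matrix (Fin n) (Fin n) ℝ)

noncomputable def Faux (v : EuclideanSpace ℝ (Fin n)) : ℝ :=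
  ∑ i, c i * max (σ.mulVec (EuclideanSpace.equiv (Fin n) ℝ v) i) 0

lemma Faux_cont : Continuous (Faux c σ) := by
  have h : Continuous fun v : EuclideanSpace ℝ (Fin n) =>
      σ.mulVec (EuclideanSpace.equiv (Fin n) ℝ v) :=
    (σ.mulVecLin.continuous_of_finiteDimensional).comp
      (EuclideanSpace.equiv (Fin n) ℝ).continuous
  exact continuous_finset_sum _ fun i _ =>
    continuous_const.mul (((continuous_apply i).comp h).max continuous_const)

lemma Faux_nonneg (hc : ∀ i, 0 < c i) (v) : 0 ≤ Faux c σ v :=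
  Finset.sum_nonneg fun i _ => mul_nonneg (hc i).le (le_max_right _ _)

lemma Faux_smul (a : ℝ) (ha : 0 ≤ a) (v) : Faux c σ (a • v) = a * Faux c σ v := by
  unfold Faux
  rw [Finset.mul_sum]
  refine Finset.sum_congr rfl fun i _ => ?_
  rw [map_smul, Matrix.mulVec_smul]
  simp only [Pi.smul_apply, smul_eq_mul]
  have h := mul_max_of_nonneg (σ.mulVec ((EuclideanSpace.equiv (Fin n) ℝ) v) i) 0 ha
  rw [mul_zero] at h
  rw [← h]
  ring

lemma Faux_subadd (hc : ∀ i, 0 < c i) (u v) :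
    Faux c σ (u + v) ≤ Faux c σ u + Faux c σ v := by
  unfold Faux
  rw [← Finset.sum_add_distrib]
  refine Finset.sum_le_sum fun i _ => ?_
  rw [← mul_add]
  refine mul_le_mul_of_nonneg_left ?_ (hc i).le
  rw [map_add, Matrix.mulVec_add]
  have := le_max_left (σ.mulVec (EuclideanSpace.equiv (Fin n) ℝ u) i) 0
  have := le_max_left (σ.mulVec (EuclideanSpace.equiv (Fin n) ℝ v) i) 0
  have := le_max_right (σ.mulVec (EuclideanSpace.equiv (Fin n) ℝ u) i) 0
  have := le_max_right (σ.mulVec (EuclideanSpace.equiv (Fin n) ℝ v) i) 0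
  simp only [Pi.add_apply]
  exact max_le (by linarith) (by linarith)

end Aux

/-- the max–min identity
`max_{‖x̃‖ = y} min_{‖x̂‖ ≤ d} c^⊤ (σ(x̃ − x̂))^+ = (y − d) · max_{‖ξ‖ = 1} c^⊤ (σξ)^+`
for `y ≥ d ≥ 0`. -/
theorem maxMin_pospart_identity {n : ℕ} (hn : 1 ≤ n)
    (c : EuclideanSpace ℝ (Fin n)) (hc : ∀ i, 0 < c i)
    (σ : Matrix (Fin n) (Fin n) ℝ) (y d : ℝ) (hd : 0 ≤ d) (hyd : d ≤ y) :
    sSup {t : ℝ | ∃ xt : EuclideanSpace ℝ (Fin n), ‖xt‖ = y ∧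
        t = sInf {s : ℝ | ∃ xh : EuclideanSpace ℝ (Fin n), ‖xh‖ ≤ d ∧
          s = ∑ i, c i * max (σ.mulVec (EuclideanSpace.equiv (Fin n) ℝ (xt - xh)) i) 0}} =
      (y - d) * sSup {t : ℝ | ∃ ξ : EuclideanSpace ℝ (Fin n), ‖ξ‖ = 1 ∧
        t = ∑ i, c i * max (σ.mulVec (EuclideanSpace.equiv (Fin n) ℝ ξ) i) 0} := by
  set F := Faux c σ with hF
  have hFdef : ∀ v, Faux c σ v =
      ∑ i, c i * max (σ.mulVec (EuclideanSpace.equiv (Fin n) ℝ v) i) 0 := fun _ => rfl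
  -- the sphere set
  set S : Set ℝ := {t : ℝ | ∃ ξ : EuclideanSpace ℝ (Fin n), ‖ξ‖ = 1 ∧
        t = ∑ i, c i * max (σ.mulVec (EuclideanSpace.equiv (Fin n) ℝ ξ) i) 0} with hS
  have hSimg : S = F '' Metric.sphere (0 : EuclideanSpace ℝ (Fin n)) 1 := by
    ext t
    simp only [hS, Set.mem_setOf_eq, Set.mem_image, mem_sphere_zero_iff_norm]
    constructor
    · rintro ⟨ξ, h1, h2⟩; exact ⟨ξ, h1, h2.symm⟩
    · rintro ⟨ξ, h1, h2⟩; exact ⟨ξ, h1, h2.symm⟩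
  -- a unit vector
  have hξ0 : ∃ ξ : EuclideanSpace ℝ (Fin n), ‖ξ‖ = 1 :=
    ⟨EuclideanSpace.single ⟨0, hn⟩ 1, by simp [EuclideanSpace.norm_single]⟩
  have hScompact : IsCompact (F '' Metric.sphere (0 : EuclideanSpace ℝ (Fin n)) 1) :=
    (isCompact_sphere 0 1).image (Faux_cont c σ)
  have hSne : S.Nonempty := by
    obtain ⟨ξ, hξ⟩ := hξ0
    exact ⟨F ξ, ξ, hξ, rfl⟩
  set M := sSup S with hM
  have hMmem : M ∈ S := by
    have h1 : (F '' Metric.sphere (0 : EuclideanSpace ℝ (Fin n)) 1).Nonempty := by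
      rw [← hSimg]; exact hSne
    have h2 := hScompact.sSup_mem h1
    rw [hM, hSimg]
    exact h2
  obtain ⟨ξs, hξs, hMeq⟩ := hMmem
  have hSbdd : BddAbove S := by rw [hSimg]; exact hScompact.bddAbove
  have hle_M : ∀ v : EuclideanSpace ℝ (Fin n), ‖v‖ = 1 → F v ≤ M :=
    fun v hv => le_csSup hSbdd ⟨v, hv, rfl⟩
  have hM0 : 0 ≤ M := by
    obtain ⟨ξ, hξ⟩ := hξ0
    exact le_trans (Faux_nonneg c σ hc ξ) (hle_M ξ hξ)
  -- F v ≤ ‖v‖ * M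
  have hFnorm : ∀ v : EuclideanSpace ℝ (Fin n), F v ≤ ‖v‖ * M := by
    intro v
    rcases eq_or_ne v 0 with rfl | hv
    · simpa using mul_nonneg (norm_nonneg (0 : EuclideanSpace ℝ (Fin n))) hM0
        |>.trans_eq' (by simp [hF, Faux])
    · have hvn : 0 < ‖v‖ := norm_pos_iff.mpr hv
      have h1 : ‖(‖v‖⁻¹ • v)‖ = 1 := by
        rw [norm_smul]; simp [abs_of_pos (inv_pos.mpr hvn), inv_mul_cancel₀ hvn.ne']
      have := hle_M _ h1
      have h2 : F v = ‖v‖ * F (‖v‖⁻¹ • v) := by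
        rw [hF, ← Faux_smul c σ _ (norm_nonneg v), smul_smul,
          mul_inv_cancel₀ hvn.ne', one_smul]
      rw [h2]
      exact mul_le_mul_of_nonneg_left this hvn.le
  -- inner inf sets
  set g : EuclideanSpace ℝ (Fin n) → ℝ := fun xt =>
    sInf {s : ℝ | ∃ xh : EuclideanSpace ℝ (Fin n), ‖xh‖ ≤ d ∧
      s = ∑ i, c i * max (σ.mulVec (EuclideanSpace.equiv (Fin n) ℝ (xt - xh)) i) 0} with hg
  have hTne : ∀ xt, ∃ s, ∃ xh : EuclideanSpace ℝ (Fin n), ‖xh‖ ≤ d ∧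
      s = ∑ i, c i * max (σ.mulVec (EuclideanSpace.equiv (Fin n) ℝ (xt - xh)) i) 0 :=
    fun xt => ⟨F (xt - 0), 0, by simpa using hd, by simp [hF, hFdef]⟩
  have hTbdd : ∀ xt : EuclideanSpace ℝ (Fin n), BddBelow
      {s : ℝ | ∃ xh : EuclideanSpace ℝ (Fin n), ‖xh‖ ≤ d ∧
        s = ∑ i, c i * max (σ.mulVec (EuclideanSpace.equiv (Fin n) ℝ (xt - xh)) i) 0} := by
    intro xt
    refine ⟨0, fun s hs => ?_⟩
    obtain ⟨xh, _, rfl⟩ := hs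
    exact Faux_nonneg c σ hc (xt - xh)
  -- upper bound: g xt ≤ (y - d) * M for ‖xt‖ = y
  have hub : ∀ xt : EuclideanSpace ℝ (Fin n), ‖xt‖ = y → g xt ≤ (y - d) * M := by
    intro xt hxt
    rcases eq_or_lt_of_le (hd.trans hyd) with hy0 | hy0
    · -- y = 0, so d = 0, xt = 0
      have hy : y = 0 := hy0.symm
      have hd0 : d = 0 := le_antisymm (hyd.trans_eq hy) hd
      have hxt0 : xt = 0 := norm_eq_zero.mp (hxt.trans hy)
      have : g xt ≤ F (xt - 0) := csInf_le (hTbdd xt) ⟨0, by simp [hd0], rfl⟩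
      simpa [hxt0, hy, hd0, hF, Faux] using this
    · have hx : g xt ≤ F (xt - (d / y) • xt) := by
        refine csInf_le (hTbdd xt) ⟨(d / y) • xt, ?_, rfl⟩
        rw [norm_smul, hxt, Real.norm_eq_abs, abs_of_nonneg (div_nonneg hd hy0.le),
          div_mul_cancel₀ _ hy0.ne']
      have h2 : xt - (d / y) • xt = ((y - d) / y) • xt := by
        rw [sub_div, div_self hy0.ne', sub_smul, one_smul]
      have h3 : F (((y - d) / y) • xt) = ((y - d) / y) * F xt :=
        Faux_smul c σ _ (div_nonneg (by linarith) hy0.le) xt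
      have h4 : F xt ≤ y * M := by
        have := hFnorm xt; rwa [hxt] at this
      calc g xt ≤ F (((y - d) / y) • xt) := by rw [← h2]; exact hx
        _ = ((y - d) / y) * F xt := h3
        _ ≤ ((y - d) / y) * (y * M) :=
            mul_le_mul_of_nonneg_left h4 (div_nonneg (by linarith) hy0.le)
        _ = (y - d) * M := by field_simp
  -- lower bound witness: xt := y • ξs gives g xt ≥ (y-d) M
  have hwit : g (y • ξs) = (y - d) * M := by
    have hnorm : ‖y • ξs‖ = y := by
      rw [norm_smul, hξs, mul_one, Real.norm_of_nonneg (hd.trans hyd)]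
    have hlb : (y - d) * M ≤ g (y • ξs) := by
      refine le_csInf ⟨F (y • ξs - 0), 0, by simpa using hd, rfl⟩ ?_
      rintro s ⟨xh, hxh, rfl⟩
      have h1 : F (y • ξs) ≤ F (y • ξs - xh) + F xh := by
        have := Faux_subadd c σ hc (y • ξs - xh) xh
        simpa using this
      have h2 : F xh ≤ d * M := by
        calc F xh ≤ ‖xh‖ * M := hFnorm xh
          _ ≤ d * M := mul_le_mul_of_nonneg_right hxh hM0
      have h3 : F (y • ξs) = y * M := by
        rw [hF, Faux_smul c σ y (hd.trans hyd) ξs]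
        have hFM : Faux c σ ξs = M := hMeq.symm
        rw [hFM]
      have : (y - d) * M ≤ F (y • ξs - xh) := by nlinarith [Faux_nonneg c σ hc (y • ξs - xh)]
      exact this
    exact le_antisymm (hub _ hnorm) hlb
  -- conclude
  have houter_ne : ∃ t, ∃ xt : EuclideanSpace ℝ (Fin n), ‖xt‖ = y ∧ t = g xt := by
    refine ⟨g (y • ξs), y • ξs, ?_, rfl⟩
    rw [norm_smul, hξs, mul_one, Real.norm_of_nonneg (hd.trans hyd)]
  refine le_antisymm ?_ ?_
  · refine csSup_le ⟨_, houter_ne.choose_spec⟩ ?_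
    rintro t ⟨xt, hxt, rfl⟩
    exact hub xt hxt
  · refine le_csSup ⟨(y - d) * M, ?_⟩ ?_
    · rintro t ⟨xt, hxt, rfl⟩
      exact hub xt hxt
    · refine ⟨y • ξs, ?_, hwit.symm⟩
      rw [norm_smul, hξs, mul_one, Real.norm_of_nonneg (hd.trans hyd)]
end
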